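/- Let f : X' → X be a proper morphism of schemes of finite type over k, and Z ⊂ X a closed subset such that f is an isomorphism over X ∖ Z. Then the induced map on arcs J_∞(X') ∖ J_∞(f^{-1}(Z)) → J_∞(X) ∖ J_∞(Z) is bijective. -/

import Mathlib

open AlgebraicGeometry CategoryTheory

universe u

/-- Let `f : X' → X` be a proper morphism of schemes and `Z ⊂ X` a closed
subset such that `f` is an isomorphism over `X ∖ Z`.  Then the induced map on arc spaces
`J_∞(X') ∖ J_∞(f⁻¹(Z)) → J_∞(X) ∖ J_∞(Z)` is bijective: every arc `δ : Spec k[[t]] → X` not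
factoring through `Z` lifts uniquely to an arc in `X'` not factoring through `f⁻¹(Z)`. -/
theorem statement_9 (k : Type u) [Field k] (X X' : Scheme.{u}) (f : X' ⟶ X) [IsProper f]
    (Z : Set X) (hZ : IsClosed Z)
    (U : X.Opens) (hU : (U : Set X) = Zᶜ) (hiso : IsIso (f ∣_ U)) :
    ∀ δ : Spec (CommRingCat.of (PowerSeries k)) ⟶ X,
      ¬ (Set.range δ.base ⊆ Z) →
      ∃! γ : Spec (CommRingCat.of (PowerSeries k)) ⟶ X',
        γ ≫ f = δ ∧ ¬ (Set.range γ.base ⊆ f.base ⁻¹' Z) := by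
  intro δ hδ
  set R := PowerSeries k
  set K := LaurentSeries k
  let φ : CommRingCat.of R ⟶ CommRingCat.of K := CommRingCat.ofHom (algebraMap R K)
  -- the generic point of Spec R
  let η : PrimeSpectrum R := ⟨⊥, Ideal.bot_prime⟩
  have hspec : ∀ x : PrimeSpectrum R, η ⤳ x := fun x =>
    (PrimeSpectrum.le_iff_specializes η x).mp bot_le
  -- the generic point maps into U
  have hδη : δ.base η ∈ (U : Set X) := by
    rw [hU]
    intro hmem
    apply hδ
    rintro _ ⟨x, rfl⟩
    have : δ.base η ⤳ δ.base x := (hspec x).map δ.base.hom.continuous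
    exact this.mem_closed hZ hmem
  -- the point of Spec K maps to the generic point of Spec R
  have himg : ∀ x : PrimeSpectrum K, (Spec.map φ).base x = η := by
    intro x
    change PrimeSpectrum.comap φ.hom x = η
    apply PrimeSpectrum.ext
    show Ideal.comap (algebraMap R K) x.asIdeal = ⊥
    have hx : x.asIdeal = ⊥ := by
      rcases Ideal.eq_bot_or_top x.asIdeal with h | h
      · exact h
      · exact absurd h x.isPrime.ne_top
    rw [hx, ← RingHom.ker_eq_comap_bot]
    exact (RingHom.injective_iff_ker_eq_bot _).mp (IsFractionRing.injective R K)
  let ε : Spec (CommRingCat.of K) ⟶ X := Spec.map φ ≫ δ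
  have hεU : Set.range ε.base ⊆ Set.range U.ι.base := by
    rw [Scheme.Opens.range_ι]
    rintro _ ⟨x, rfl⟩
    show δ.base ((Spec.map φ).base x) ∈ (U : Set X)
    rw [himg x]
    exact hδη
  let ε' : Spec (CommRingCat.of K) ⟶ U.toScheme := IsOpenImmersion.lift U.ι ε hεU
  have hε' : ε' ≫ U.ι = ε := IsOpenImmersion.lift_fac U.ι ε hεU
  -- the lift of ε to X' through the isomorphism over U
  let i₁ : Spec (CommRingCat.of K) ⟶ X' := ε' ≫ inv (f ∣_ U) ≫ (f ⁻¹ᵁ U).ι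
  have hi₁f : i₁ ≫ f = ε := by
    have h1 : inv (f ∣_ U) ≫ (f ⁻¹ᵁ U).ι ≫ f = U.ι := by
      rw [← morphismRestrict_ι f U, IsIso.inv_hom_id_assoc]
    simp only [i₁, Category.assoc, h1, hε']
  -- uniqueness of the generic-fiber lift: any lift agrees with i₁ on the generic fiber
  have key : ∀ γ : Spec (CommRingCat.of R) ⟶ X', γ ≫ f = δ → Spec.map φ ≫ γ = i₁ := by
    intro γ hγ
    have hrange : Set.range (Spec.map φ ≫ γ).base ⊆ Set.range (f ⁻¹ᵁ U).ι.base := by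
      rw [Scheme.Opens.range_ι]
      rintro _ ⟨x, rfl⟩
      show γ.base ((Spec.map φ).base x) ∈ f.base ⁻¹' (U : Set X)
      have : f.base (γ.base ((Spec.map φ).base x)) = δ.base ((Spec.map φ).base x) := by
        rw [← hγ]; rfl
      rw [Set.mem_preimage, this, himg x]
      exact hδη
    let g' : Spec (CommRingCat.of K) ⟶ (f ⁻¹ᵁ U).toScheme :=
      IsOpenImmersion.lift (f ⁻¹ᵁ U).ι (Spec.map φ ≫ γ) hrange
    have hg' : g' ≫ (f ⁻¹ᵁ U).ι = Spec.map φ ≫ γ := IsOpenImmersion.lift_fac _ _ hrange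
    have hg'2 : g' ≫ (f ∣_ U) = ε' := by
      have : (g' ≫ (f ∣_ U)) ≫ U.ι = ε' ≫ U.ι := by
        rw [Category.assoc, morphismRestrict_ι, hε', ← Category.assoc, hg', Category.assoc, hγ]
      exact (cancel_mono U.ι).mp this
    calc Spec.map φ ≫ γ = g' ≫ (f ⁻¹ᵁ U).ι := hg'.symm
      _ = (g' ≫ (f ∣_ U)) ≫ inv (f ∣_ U) ≫ (f ⁻¹ᵁ U).ι := by
          rw [Category.assoc, IsIso.hom_inv_id_assoc]
      _ = i₁ := by rw [hg'2]
  -- the valuative criterion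
  have hvc : ValuativeCriterion f := by
    have h : (ValuativeCriterion ⊓ @QuasiCompact ⊓ @QuasiSeparated ⊓ @LocallyOfFiniteType) f := by
      rw [← IsProper.eq_valuativeCriterion]; infer_instance
    exact h.1.1.1
  let S : ValuativeCommSq f :=
    { R := R, K := K, i₁ := i₁, i₂ := δ
      commSq := ⟨by rw [hi₁f]⟩ }
  obtain ⟨hS⟩ := hvc S
  let L := (hS.default : S.commSq.LiftStruct)
  -- the condition on the range is automatic
  have auto : ∀ γ : Spec (CommRingCat.of R) ⟶ X', γ ≫ f = δ →
      ¬ (Set.range γ.base ⊆ f.base ⁻¹' Z) := by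
    intro γ hγ hsub
    apply hδ
    rintro _ ⟨x, rfl⟩
    have : δ.base x = f.base (γ.base x) := by rw [← hγ]; rfl
    rw [this]
    exact hsub ⟨x, rfl⟩
  refine ⟨L.l, ⟨L.fac_right, auto L.l L.fac_right⟩, ?_⟩
  rintro γ ⟨hγ, -⟩
  have : ({ l := γ, fac_left := key γ hγ, fac_right := hγ } : S.commSq.LiftStruct) = L :=
    hS.uniq _
  exact congrArg CommSq.LiftStruct.l this
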